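/- arXiv:1707.06550 — 3 statements merged into one kernel-verified Lean document; each statement's English description precedes it below -/
import Mathlib

section
/- Let X be a topological space, M a metric space, and L ⊆ C(X,M) a family of continuous functions such that the closure of L in M^X (with the product topology) is compact. If there is a nonempty subset Δ of X that separates L (i.e., for every A ⊆ L there exist closed sets D₁, D₂ ⊆ M with dist(D₁, D₂) > 0 and a point x_A ∈ Δ such that χ(x_A) ∈ D₁ for all χ ∈ A and χ(x_A) ∈ D₂ for all χ ∈ L \ A), then any two disjoint subsets of L have disjoint closures in M^X. -/
/-- If `L ⊆ C(X,M)` has compact closure in `M^X` (pointwise topology) and some nonempty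
`Δ ⊆ X` separates `L`, then any two disjoint subsets of `L` have disjoint closures
in `M^X`. -/
theorem stmt4 {X M : Type*} [TopologicalSpace X] [MetricSpace M]
    (L : Set (X → M)) (hLcont : ∀ f ∈ L, Continuous f)
    (hLcomp : IsCompact (closure L))
    (Δ : Set X) (hΔ : Δ.Nonempty)
    (hsep : ∀ A ⊆ L, ∃ (D₁ D₂ : Set M) (x : X), x ∈ Δ ∧
      IsClosed D₁ ∧ IsClosed D₂ ∧ (∃ ε > (0 : ℝ), ∀ a ∈ D₁, ∀ b ∈ D₂, ε ≤ dist a b) ∧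
      (∀ χ ∈ A, χ x ∈ D₁) ∧ (∀ χ ∈ L \ A, χ x ∈ D₂)) :
    ∀ A ⊆ L, ∀ B ⊆ L, Disjoint A B → Disjoint (closure A) (closure B) := by
  intro A hA B hB hAB
  obtain ⟨D₁, D₂, x, -, hD₁c, hD₂c, ⟨ε, hε, hdist⟩, hA₁, hL₂⟩ := hsep A hA
  have hB₂ : B ⊆ L \ A := fun f hf => ⟨hB hf, fun hfA => hAB.ne_of_mem hfA hf rfl⟩
  have hcont : Continuous fun f : X → M => f x := continuous_apply x
  have hclA : closure A ⊆ (fun f : X → M => f x) ⁻¹' D₁ :=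
    closure_minimal (fun f hf => hA₁ f hf) (hD₁c.preimage hcont)
  have hclB : closure B ⊆ (fun f : X → M => f x) ⁻¹' D₂ :=
    closure_minimal (fun f hf => hL₂ f (hB₂ hf)) (hD₂c.preimage hcont)
  refine Set.disjoint_left.mpr fun f hfA hfB => ?_
  have := hdist _ (hclA hfA) _ (hclB hfB)
  simp only [dist_self] at this
  linarith
end

section
/- Let X be a topological space, M a metric space, and L a subset of M^X whose closure in M^X is compact. If any two disjoint subsets of L have disjoint closures in M^X, then the closure of L in M^X is canonically homeomorphic to the Stone–Čech compactification βL of L equipped with the discrete topology (that is, the inclusion L → closure(L) extends to a homeomorphism βL → closure(L)). -/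
/-- If `L ⊆ M^X` has compact closure in `M^X` and any two disjoint subsets of `L` have
disjoint closures in `M^X`, then the closure of `L` is canonically homeomorphic to the
Stone–Čech compactification of `L` equipped with the discrete topology: the inclusion
`L → closure L` extends to a homeomorphism `βL ≃ closure L`. -/
theorem stmt5 {X M : Type*} [TopologicalSpace X] [MetricSpace M]
    (L : Set (X → M)) (hLcomp : IsCompact (closure L))
    (hdisj : ∀ A ⊆ L, ∀ B ⊆ L, Disjoint A B → Disjoint (closure A) (closure B))
    (ι : Type*) [TopologicalSpace ι] [DiscreteTopology ι] (e : ι ≃ L) :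
    ∃ h : StoneCech ι ≃ₜ closure L,
      ∀ i : ι, h (stoneCechUnit i) = ⟨(e i : X → M), subset_closure (e i).2⟩ := by
  haveI : CompactSpace (closure L) := isCompact_iff_compactSpace.mp hLcomp
  set f : ι → (closure L : Set (X → M)) :=
    fun i => ⟨(e i : X → M), subset_closure (e i).2⟩ with hfdef
  have hfc : Continuous f := continuous_of_discreteTopology
  have hfinj : Function.Injective f := by
    intro i j hij
    have h2 : ((f i : X → M)) = (f j : X → M) := Subtype.ext_iff.mp hij
    exact e.injective (Subtype.ext h2)
  have hext : stoneCechExtend hfc ∘ stoneCechUnit = f := stoneCechExtend_extends hfc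
  -- dense range of f
  have hdense : DenseRange f := by
    intro z
    rw [closure_subtype]
    have hsub : L ⊆ Subtype.val '' (Set.range f) := by
      intro x hx
      exact ⟨f (e.symm ⟨x, hx⟩), ⟨_, rfl⟩, by simp [hfdef]⟩
    exact closure_mono hsub (z.2)
  -- injectivity of the extension
  have hinj : Function.Injective (stoneCechExtend hfc) := by
    intro x y hxy
    by_contra hne
    obtain ⟨U, V, hU, hV, hxU, hyV, hUV⟩ := t2_separation hne
    set A : Set ι := stoneCechUnit ⁻¹' U with hA
    set B : Set ι := stoneCechUnit ⁻¹' V with hB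
    have hxA : x ∈ closure (stoneCechUnit '' A) := by
      refine closure_mono ?_ (denseRange_stoneCechUnit.open_subset_closure_inter hU hxU)
      rintro _ ⟨hu, i, rfl⟩; exact ⟨i, hu, rfl⟩
    have hyB : y ∈ closure (stoneCechUnit '' B) := by
      refine closure_mono ?_ (denseRange_stoneCechUnit.open_subset_closure_inter hV hyV)
      rintro _ ⟨hu, i, rfl⟩; exact ⟨i, hu, rfl⟩
    have hmap : ∀ (S : Set ι) (z : StoneCech ι), z ∈ closure (stoneCechUnit '' S) →
        (stoneCechExtend hfc z).1 ∈ closure ((fun i => (e i : X → M)) '' S) := by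
      intro S z hz
      have h1 : stoneCechExtend hfc z ∈ closure (stoneCechExtend hfc '' (stoneCechUnit '' S)) :=
        image_closure_subset_closure_image (continuous_stoneCechExtend hfc) ⟨z, hz, rfl⟩
      have h2 : (stoneCechExtend hfc z).1 ∈
          closure (Subtype.val '' (stoneCechExtend hfc '' (stoneCechUnit '' S))) :=
        image_closure_subset_closure_image continuous_subtype_val ⟨_, h1, rfl⟩
      have himg : Subtype.val '' (stoneCechExtend hfc '' (stoneCechUnit '' S))
          = (fun i => (e i : X → M)) '' S := by
        rw [← Set.image_comp, ← Set.image_comp]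
        refine Set.image_congr fun i _ => ?_
        simp only [Function.comp_apply]
        exact congrArg Subtype.val (congrFun hext i)
      rwa [himg] at h2
    have hAB : Disjoint ((fun i => (e i : X → M)) '' A) ((fun i => (e i : X → M)) '' B) := by
      rw [Set.disjoint_left]
      rintro _ ⟨i, hi, rfl⟩ ⟨j, hj, hji⟩
      have : i = j := e.injective (Subtype.ext hji.symm)
      subst this
      exact Set.disjoint_left.mp hUV hi hj
    have hdis := hdisj _ (by rintro _ ⟨i, _, rfl⟩; exact (e i).2) _
      (by rintro _ ⟨i, _, rfl⟩; exact (e i).2) hAB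
    have hx' := hmap A x hxA
    have hy' := hmap B y hyB
    rw [hxy] at hx'
    exact Set.disjoint_left.mp hdis hx' hy'
  -- surjectivity of the extension
  have hsurj : Function.Surjective (stoneCechExtend hfc) := by
    have hcl : IsClosed (Set.range (stoneCechExtend hfc)) :=
      (isCompact_range (continuous_stoneCechExtend hfc)).isClosed
    intro z
    have hsub : Set.range f ⊆ Set.range (stoneCechExtend hfc) := by
      rintro _ ⟨i, rfl⟩
      exact ⟨stoneCechUnit i, congrFun hext i⟩
    have : z ∈ closure (Set.range (stoneCechExtend hfc)) :=
      closure_mono hsub (hdense z)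
    rwa [hcl.closure_eq] at this
  refine ⟨Continuous.homeoOfEquivCompactToT2
    (f := Equiv.ofBijective _ ⟨hinj, hsurj⟩) (continuous_stoneCechExtend hfc), fun i => ?_⟩
  exact congrFun hext i
end

section
/- Let G be a maximally almost periodic abelian topological group with Bohr compactification bG (so G embeds as a dense subgroup of bG). Let A ⊆ G and let N ⊆ bG be a subset containing the neutral element such that A + N is compact in bG. Then for every subset F ⊆ A there exists A₀ ⊆ A with |A₀| ≤ |N| such that cl_{bG}(F) ⊆ A₀ + N + cl_{G⁺}(F − F), where G⁺ denotes G with the topology induced from bG and cl_{G⁺} denotes closure in that topology. -/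
open Pointwise

universe u v

/-- Let `G` be a maximally almost periodic abelian topological group, embedded via a
continuous injective homomorphism `b` with dense image in its Bohr compactification
`bG` (a compact Hausdorff abelian group).  Let `A ⊆ G` and let `N ⊆ bG` contain `0`
with `A + N` compact in `bG`.  Then for every `F ⊆ A` there is `A₀ ⊆ A` with
`|A₀| ≤ |N|` and `cl_{bG}(F) ⊆ A₀ + N + cl_{G⁺}(F - F)`, where the closure of `F - F`
in the Bohr topology `G⁺` is viewed inside `bG` as `range b ∩ cl_{bG}(b(F - F))`. -/
theorem stmt16 {G : Type u} {bG : Type v} [TopologicalSpace G] [AddCommGroup G] [IsTopologicalAddGroup G]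
    [TopologicalSpace bG] [AddCommGroup bG] [IsTopologicalAddGroup bG]
    [CompactSpace bG] [T2Space bG]
    (b : G →+ bG) (hbc : Continuous b) (hbinj : Function.Injective b)
    (hbd : DenseRange b)
    (A : Set G) (N : Set bG) (hN0 : (0 : bG) ∈ N)
    (hcomp : IsCompact (⇑b '' A + N)) :
    ∀ F ⊆ A, ∃ A₀ ⊆ A, Cardinal.lift.{v} (Cardinal.mk A₀) ≤ Cardinal.lift.{u} (Cardinal.mk N) ∧
      closure (⇑b '' F) ⊆
        ⇑b '' A₀ + N + (Set.range ⇑b ∩ closure (⇑b '' (F - F))) := by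
  classical
  intro F hFA
  set S := closure (⇑b '' F) with hS
  -- "good" elements of N
  set Ng : Set bG := {n | n ∈ N ∧ ∃ a ∈ A, b a + n ∈ S} with hNg
  have hNgN : Ng ⊆ N := fun n hn => hn.1
  -- choice of witnesses
  let pick : Ng → G := fun n => n.2.2.choose
  have hpick : ∀ n : Ng, pick n ∈ A ∧ b (pick n) + (n : bG) ∈ S :=
    fun n => ⟨n.2.2.choose_spec.1, n.2.2.choose_spec.2⟩
  refine ⟨Set.range pick, ?_, ?_, ?_⟩
  · rintro a ⟨n, rfl⟩; exact (hpick n).1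
  · calc Cardinal.lift.{v} (Cardinal.mk (Set.range pick))
        ≤ Cardinal.lift.{u} (Cardinal.mk Ng) := Cardinal.mk_range_le_lift
      _ ≤ Cardinal.lift.{u} (Cardinal.mk N) :=
          Cardinal.lift_le.2 (Cardinal.mk_le_mk_of_subset hNgN)
  · intro x hx
    have hsub : ⇑b '' F ⊆ ⇑b '' A + N := by
      rintro _ ⟨f, hf, rfl⟩
      exact ⟨b f, ⟨f, hFA hf, rfl⟩, 0, hN0, add_zero _⟩
    have hxAN : x ∈ ⇑b '' A + N :=
      closure_minimal hsub hcomp.isClosed hx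
    obtain ⟨_, ⟨a, haA, rfl⟩, n, hnN, rfl⟩ := hxAN
    have hnNg : n ∈ Ng := ⟨hnN, a, haA, hx⟩
    set a₀ := pick ⟨n, hnNg⟩ with ha₀
    have ha₀S : b a₀ + n ∈ S := (hpick ⟨n, hnNg⟩).2
    have hdiff : b a - b a₀ ∈ closure (⇑b '' (F - F)) := by
      have := map_mem_closure₂ (f := fun p q : bG => p - q) continuous_sub hx ha₀S
        (u := ⇑b '' (F - F)) ?_
      · simpa using this
      · rintro _ ⟨p, hp, rfl⟩ _ ⟨q, hq, rfl⟩
        exact ⟨p - q, Set.sub_mem_sub hp hq, map_sub b p q⟩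
    have key : b a₀ + n + (b a - b a₀) = b a + n := by abel
    show b a + n ∈ _
    rw [← key]
    refine Set.add_mem_add (Set.add_mem_add ⟨a₀, ⟨⟨n, hnNg⟩, rfl⟩, rfl⟩ hnN) ?_
    exact ⟨⟨a - a₀, map_sub b a a₀⟩, hdiff⟩
end
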